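/- Let n ≥ 2 and 0 ≤ r < n be integers and let w_0, w_1, …, w_n be positive integers with w_0 = 1. Set d_1 = w_{r+1} + … + w_n and d_0 = w_0 + w_1 + … + w_r. Consider the multivariate Laurent polynomial over ℚ in the variables x_1,…,x_r, y_{r+1},…,y_{n−1} given by f = (y_{r+1} + … + y_{n−1} + 1)^{d_1} · x_1^{−w_1} ⋯ x_r^{−w_r} · y_{r+1}^{−w_{r+1}} ⋯ y_{n−1}^{−w_{n−1}} + x_1 + … + x_r. Then for every natural number N that is not divisible by d_0, the constant term (the coefficient of the zero exponent vector) of f^N equals 0. -/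

import Mathlib

lemma aux_support_mul {G : Type*} [AddCommMonoid G] {M : Type*} [AddCommMonoid M]
    (φ : G →+ M) {p q : AddMonoidAlgebra ℚ G} {a b : M}
    (hp : ∀ u ∈ p.coeff.support, φ u = a) (hq : ∀ u ∈ q.coeff.support, φ u = b) :
    ∀ u ∈ (p * q).coeff.support, φ u = a + b := by
  classical
  intro u hu
  have := AddMonoidAlgebra.support_coeff_mul_subset p q hu
  rw [Finset.mem_add] at this
  obtain ⟨x, hx, y, hy, rfl⟩ := this
  rw [map_add, hp x hx, hq y hy]

lemma aux_support_pow {G : Type*} [AddCommMonoid G] {M : Type*} [AddCommMonoid M]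
    (φ : G →+ M) {p : AddMonoidAlgebra ℚ G} {a : M}
    (hp : ∀ u ∈ p.coeff.support, φ u = a) :
    ∀ N : ℕ, ∀ u ∈ (p ^ N).coeff.support, φ u = N • a := by
  intro N
  induction N with
  | zero =>
    intro u hu
    rw [pow_zero] at hu
    have := Finsupp.support_single_subset hu
    simp only [Finset.mem_singleton] at this
    subst this
    simp
  | succ k ih =>
    intro u hu
    rw [pow_succ] at hu
    have := aux_support_mul φ ih hp u hu
    rw [this, succ_nsmul]

lemma aux_support_add {G : Type*} [AddCommMonoid G] {p q : AddMonoidAlgebra ℚ G} {u : G}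
    (hu : u ∈ (p + q).coeff.support) : u ∈ p.coeff.support ∨ u ∈ q.coeff.support := by
  by_contra h
  rw [not_or] at h
  obtain ⟨h1, h2⟩ := h
  rw [Finsupp.notMem_support_iff] at h1 h2
  rw [Finsupp.mem_support_iff] at hu
  exact hu (show p.coeff u + q.coeff u = 0 by rw [h1, h2, add_zero])

lemma aux_support_sum {G ι : Type*} [AddCommMonoid G] (s : Finset ι)
    (g : ι → AddMonoidAlgebra ℚ G) :
    ∀ u ∈ (∑ i ∈ s, g i).coeff.support, ∃ i ∈ s, u ∈ (g i).coeff.support := by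
  classical
  induction s using Finset.induction with
  | empty =>
    intro u hu
    rw [Finset.sum_empty] at hu
    exact absurd hu (by simp)
  | @insert i s his ih =>
    intro u hu
    rw [Finset.sum_insert his] at hu
    rcases aux_support_add hu with h | h
    · exact ⟨i, Finset.mem_insert_self i s, h⟩
    · obtain ⟨j, hj, hju⟩ := ih u h
      exact ⟨j, Finset.mem_insert_of_mem hj, hju⟩

/-- With the same Laurent polynomial `f` as in Statement 3
(the Hori–Vafa weak Landau–Ginzburg model of a degree `d_1 = w_{r+1} + … + w_n`
hypersurface in `P(w_0, …, w_n)`, with Fano index `d_0 = w_0 + … + w_r`),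
the constant term of `f ^ N` vanishes whenever `d_0` does not divide `N`. -/
theorem constant_terms_vanish_off_fano_index_multiples
    (n r : ℕ) (hn : 2 ≤ n) (hr : r < n)
    (w : ℕ → ℕ) (hwpos : ∀ j ≤ n, 0 < w j) (hw0 : w 0 = 1)
    (d1 d0 : ℕ)
    (hd1 : d1 = ∑ j ∈ Finset.Icc (r + 1) n, w j)
    (hd0 : d0 = ∑ j ∈ Finset.Icc 0 r, w j)
    (f : AddMonoidAlgebra ℚ (Fin (n - 1) →₀ ℤ))
    (hf : f =
      ((∑ j ∈ Finset.univ.filter (fun j : Fin (n - 1) => r ≤ (j : ℕ)),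
          AddMonoidAlgebra.single (Finsupp.single j 1) (1 : ℚ)) + 1) ^ d1
        * AddMonoidAlgebra.single
            (Finsupp.equivFunOnFinite.symm fun j : Fin (n - 1) => -(w ((j : ℕ) + 1) : ℤ))
            (1 : ℚ)
      + ∑ j ∈ Finset.univ.filter (fun j : Fin (n - 1) => (j : ℕ) < r),
          AddMonoidAlgebra.single (Finsupp.single j 1) (1 : ℚ)) :
    ∀ N : ℕ, ¬ d0 ∣ N → (f ^ N).coeff 0 = 0 := by
  classical
  set A : AddMonoidAlgebra ℚ (Fin (n - 1) →₀ ℤ) :=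
    (∑ j ∈ Finset.univ.filter (fun j : Fin (n - 1) => r ≤ (j : ℕ)),
        AddMonoidAlgebra.single (Finsupp.single j 1) (1 : ℚ)) + 1 with hA'
  set vS : AddMonoidAlgebra ℚ (Fin (n - 1) →₀ ℤ) :=
    AddMonoidAlgebra.single
      (Finsupp.equivFunOnFinite.symm fun j : Fin (n - 1) => -(w ((j : ℕ) + 1) : ℤ))
      (1 : ℚ) with hvS'
  set B : AddMonoidAlgebra ℚ (Fin (n - 1) →₀ ℤ) :=
    ∑ j ∈ Finset.univ.filter (fun j : Fin (n - 1) => (j : ℕ) < r),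
      AddMonoidAlgebra.single (Finsupp.single j 1) (1 : ℚ) with hB'
  -- the grading homomorphism
  set φ : (Fin (n - 1) →₀ ℤ) →+ ZMod d0 :=
    Finsupp.liftAddHom (fun j : Fin (n - 1) =>
      if (j : ℕ) < r then Int.castAddHom (ZMod d0) else 0) with hφ
  have hφ_single : ∀ (j : Fin (n - 1)) (c : ℤ),
      φ (Finsupp.single j c) = if (j : ℕ) < r then (c : ZMod d0) else 0 := by
    intro j c
    rw [hφ, Finsupp.liftAddHom_apply_single]
    split <;> simp
  -- numeric facts
  have hsum : (∑ i ∈ Finset.range r, w (i + 1)) + 1 = d0 := by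
    have h1 : Finset.Icc 0 r = Finset.range (r + 1) := by
      ext i; simp [Nat.lt_succ_iff]
    rw [hd0, h1, Finset.sum_range_succ', hw0]
  -- value of φ on the shift vector v
  have hφv : φ (Finsupp.equivFunOnFinite.symm fun j : Fin (n - 1) =>
      -(w ((j : ℕ) + 1) : ℤ)) = 1 := by
    rw [hφ, Finsupp.liftAddHom_apply]
    rw [Finsupp.sum_fintype]
    · have heq : ∀ j : Fin (n - 1),
          (if (j : ℕ) < r then Int.castAddHom (ZMod d0) else 0)
            ((Finsupp.equivFunOnFinite.symm fun j : Fin (n - 1) =>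
              -(w ((j : ℕ) + 1) : ℤ)) j)
          = (fun i : ℕ => if i < r then ((-(w (i + 1) : ℤ)) : ZMod d0) else 0) (j : ℕ) := by
        intro j
        simp only [Finsupp.coe_equivFunOnFinite_symm]
        split <;> simp
      rw [Finset.sum_congr rfl (fun j _ => heq j),
        Fin.sum_univ_eq_sum_range
          (fun i : ℕ => if i < r then ((-(w (i + 1) : ℤ)) : ZMod d0) else 0) (n - 1)]
      have hfil : (Finset.range (n - 1)).filter (fun i => i < r) = Finset.range r := by
        ext i; simp; omega
      rw [← Finset.sum_filter, hfil]
      have h3 : (∑ i ∈ Finset.range r, ((-(w (i + 1) : ℤ)) : ZMod d0))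
          = -((∑ i ∈ Finset.range r, w (i + 1) : ℕ) : ZMod d0) := by
        push_cast
        rw [← Finset.sum_neg_distrib]
      rw [h3]
      have h4 : ((∑ i ∈ Finset.range r, w (i + 1) : ℕ) : ZMod d0) = -1 := by
        have h2 : ((∑ i ∈ Finset.range r, w (i + 1) : ℕ) : ZMod d0) + 1 = (d0 : ZMod d0) := by
          have := congrArg (fun m : ℕ => (m : ZMod d0)) hsum
          push_cast at this
          rw [Nat.cast_sum]; exact this
        rw [ZMod.natCast_self] at h2
        linear_combination h2
      rw [h4, neg_neg]
    · intro j; split <;> simp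
  -- support of f is in degree 1
  have hfsupp : ∀ u ∈ f.coeff.support, φ u = 1 := by
    have hA : ∀ u ∈ A.coeff.support, φ u = 0 := by
      intro u hu
      rw [hA'] at hu
      rcases aux_support_add hu with h | h
      · obtain ⟨j, hj, hju⟩ := aux_support_sum _ _ u h
        have := Finsupp.support_single_subset hju
        simp only [Finset.mem_singleton] at this
        subst this
        rw [hφ_single]
        rw [Finset.mem_filter] at hj
        rw [if_neg (by omega)]
      · have h1 : u ∈ (AddMonoidAlgebra.single (0 : Fin (n - 1) →₀ ℤ) (1 : ℚ)).coeff.support := h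
        have := Finsupp.support_single_subset h1
        simp only [Finset.mem_singleton] at this
        subst this
        simp
    have hsingle : ∀ u ∈ vS.coeff.support, φ u = 1 := by
      intro u hu
      rw [hvS'] at hu
      have := Finsupp.support_single_subset hu
      simp only [Finset.mem_singleton] at this
      subst this
      exact hφv
    have hB : ∀ u ∈ B.coeff.support, φ u = 1 := by
      intro u hu
      rw [hB'] at hu
      obtain ⟨j, hj, hju⟩ := aux_support_sum _ _ u hu
      have := Finsupp.support_single_subset hju
      simp only [Finset.mem_singleton] at this
      subst this
      rw [hφ_single]
      rw [Finset.mem_filter] at hj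
      rw [if_pos hj.2]
      exact Int.cast_one
    intro u hu
    rw [hf] at hu
    rcases aux_support_add hu with h | h
    · have hApow := aux_support_pow φ hA d1
      have := aux_support_mul φ hApow hsingle u h
      simpa using this
    · exact hB u h
  -- conclude
  intro N hN
  by_contra hc
  have h0 : (0 : Fin (n - 1) →₀ ℤ) ∈ (f ^ N).coeff.support := Finsupp.mem_support_iff.mpr hc
  have hφ0 := aux_support_pow φ hfsupp N 0 h0
  rw [map_zero] at hφ0
  have hN' : (N : ZMod d0) = 0 := by
    have := hφ0.symm
    simpa [nsmul_eq_mul] using this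
  exact hN ((ZMod.natCast_eq_zero_iff N d0).mp hN')
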